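/- arXiv:1703.09624 — 5 statements merged into one kernel-verified Lean document; each statement's English description precedes it below -/
import Mathlib

section
/- Let n ≥ 1 and λ₀ ∈ ℂ, and let M(λ₀) be the binomial matrix defined below. Then the determinant of the 2n×2n submatrix M₂ of M(λ₀) consisting of its first 2n columns equals 2^n. -/
/-- The binomial matrix `M(λ₀)` of size `2n × (2n+1)` (rows and columns here
0-indexed; row `2m−1` ↦ even index, row `2m` ↦ odd index, etc.):
for `1 ≤ m ≤ n`, `1 ≤ k ≤ n`,
`M_{2m−1,2k−1} = M_{2m−1,2k} = C(k−1,m−1)·λ₀^(k−m)`,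
`M_{2m,2k−1} = −C(k−1,m−1)·conj(λ₀)^(k−m)`, `M_{2m,2k} = C(k−1,m−1)·conj(λ₀)^(k−m)`,
and last column `M_{2m−1,2n+1} = C(n,m−1)·λ₀^(n+1−m)`,
`M_{2m,2n+1} = −C(n,m−1)·conj(λ₀)^(n+1−m)`. -/
noncomputable def binM (n : ℕ) (l : ℂ) : Matrix (Fin (2*n)) (Fin (2*n+1)) ℂ :=
  Matrix.of fun r c =>
    let m0 := (r : ℕ) / 2
    if (c : ℕ) = 2*n then
      if (r : ℕ) % 2 = 0 then (Nat.choose n m0 : ℂ) * l ^ (n - m0)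
      else -((Nat.choose n m0 : ℂ) * (starRingEnd ℂ l) ^ (n - m0))
    else
      let k0 := (c : ℕ) / 2
      if (r : ℕ) % 2 = 0 then (Nat.choose k0 m0 : ℂ) * l ^ (k0 - m0)
      else if (c : ℕ) % 2 = 0 then
        -((Nat.choose k0 m0 : ℂ) * (starRingEnd ℂ l) ^ (k0 - m0))
      else (Nat.choose k0 m0 : ℂ) * (starRingEnd ℂ l) ^ (k0 - m0)

/-- The interleaving equivalence `Fin n ⊕ Fin n ≃ Fin (2n)`. -/
def interleave (n : ℕ) : Fin n ⊕ Fin n ≃ Fin (2*n) where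
  toFun x := Sum.elim (fun m => (⟨2*m.1, by have := m.2; omega⟩ : Fin (2*n)))
    (fun m => ⟨2*m.1+1, by have := m.2; omega⟩) x
  invFun r := if r.1 % 2 = 0 then Sum.inl ⟨r.1/2, by have := r.2; omega⟩
    else Sum.inr ⟨r.1/2, by have := r.2; omega⟩
  left_inv x := by
    cases x with
    | inl m => simp only [Sum.elim_inl]; simp only [show 2 * (m:ℕ) % 2 = 0 by omega, ↓reduceIte]
               simp only [Sum.inl.injEq]; ext; simp only [Fin.val_mk]; omega
    | inr m => simp only [Sum.elim_inr]; simp only [show ¬ ((2 * (m:ℕ) + 1) % 2 = 0) by omega, ↓reduceIte]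
               simp only [Sum.inr.injEq]; ext; simp only [Fin.val_mk]; omega
  right_inv r := by
    dsimp only
    by_cases h : r.1 % 2 = 0
    · rw [if_pos h]; simp only [Sum.elim_inl]; ext; simp only [Fin.val_mk]; omega
    · rw [if_neg h]; simp only [Sum.elim_inr]; ext; simp only [Fin.val_mk]; omega

/-- The unitriangular binomial matrix. -/
noncomputable def binU (n : ℕ) (z : ℂ) : Matrix (Fin n) (Fin n) ℂ :=
  Matrix.of fun m k => (Nat.choose k.1 m.1 : ℂ) * z ^ (k.1 - m.1)

lemma binU_det (n : ℕ) (z : ℂ) : (binU n z).det = 1 := by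
  rw [Matrix.det_of_upperTriangular]
  · apply Finset.prod_eq_one
    intro i _
    simp [binU]
  · intro i j h
    simp only [Function.id_def] at h
    have : (j : ℕ) < i := h
    simp [binU, Nat.choose_eq_zero_of_lt this]

/-- The determinant of the `2n × 2n` submatrix `M₂` of `M(λ₀)` consisting of
its first `2n` columns equals `2^n`. -/
theorem stmt4 (n : ℕ) (hn : 1 ≤ n) (l : ℂ) :
    Matrix.det (Matrix.of fun i (j : Fin (2*n)) => binM n l i j.castSucc) =
      2 ^ n := by
  set N : Matrix (Fin (2*n)) (Fin (2*n)) ℂ :=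
    Matrix.of fun i (j : Fin (2*n)) => binM n l i j.castSucc with hN
  set A := binU n l with hA
  set B := binU n (starRingEnd ℂ l) with hB
  have hsub : N.submatrix (interleave n) (interleave n) =
      Matrix.fromBlocks A A (-B) B := by
    ext i j
    have key : ∀ (r c : Fin (2*n)),
        N r c = binM n l r c.castSucc := fun r c => rfl
    cases i with
    | inl m =>
      cases j with
      | inl k =>
        simp only [Matrix.submatrix_apply, interleave, Equiv.coe_fn_mk, Sum.elim_inl,
          Matrix.fromBlocks_apply₁₁, key, binM, Matrix.of_apply, Fin.coe_castSucc]
        rw [if_neg (by have := k.2; omega)]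
        rw [if_pos (by omega)]
        have h1 : 2 * (k:ℕ) / 2 = k := by omega
        have h2 : 2 * (m:ℕ) / 2 = m := by omega
        rw [h1, h2]; rfl
      | inr k =>
        simp only [Matrix.submatrix_apply, interleave, Equiv.coe_fn_mk, Sum.elim_inl,
          Sum.elim_inr, Matrix.fromBlocks_apply₁₂, key, binM, Matrix.of_apply, Fin.coe_castSucc]
        rw [if_neg (by have := k.2; omega)]
        rw [if_pos (by omega)]
        have h1 : (2 * (k:ℕ) + 1) / 2 = k := by omega
        have h2 : 2 * (m:ℕ) / 2 = m := by omega
        rw [h1, h2]; rfl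
    | inr m =>
      cases j with
      | inl k =>
        simp only [Matrix.submatrix_apply, interleave, Equiv.coe_fn_mk, Sum.elim_inl,
          Sum.elim_inr, Matrix.fromBlocks_apply₂₁, key, binM, Matrix.of_apply, Fin.coe_castSucc]
        rw [if_neg (by have := k.2; omega)]
        rw [if_neg (by omega), if_pos (by omega)]
        have h1 : 2 * (k:ℕ) / 2 = k := by omega
        have h2 : (2 * (m:ℕ) + 1) / 2 = m := by omega
        rw [h1, h2]; rfl
      | inr k =>
        simp only [Matrix.submatrix_apply, interleave, Equiv.coe_fn_mk, Sum.elim_inr,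
          Matrix.fromBlocks_apply₂₂, key, binM, Matrix.of_apply, Fin.coe_castSucc]
        rw [if_neg (by have := k.2; omega)]
        rw [if_neg (by omega), if_neg (by omega)]
        have h1 : (2 * (k:ℕ) + 1) / 2 = k := by omega
        have h2 : (2 * (m:ℕ) + 1) / 2 = m := by omega
        rw [h1, h2]; rfl
  have hdet : N.det = (Matrix.fromBlocks A A (-B) B).det := by
    rw [← Matrix.det_submatrix_equiv_self (interleave n) N, hsub]
  rw [hdet]
  have hmul : Matrix.fromBlocks A A (-B) B *
      Matrix.fromBlocks (1 : Matrix (Fin n) (Fin n) ℂ) (-1) 0 1 =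
      Matrix.fromBlocks A 0 (-B) (B + B) := by
    rw [Matrix.fromBlocks_multiply]
    have e11 : A * 1 + A * 0 = A := by simp
    have e12 : A * (-1) + A * 1 = 0 := by simp [Matrix.mul_neg]
    have e21 : -B * 1 + B * 0 = -B := by simp
    have e22 : -B * (-1) + B * 1 = B + B := by
      simp [Matrix.mul_neg, Matrix.neg_mul, neg_neg]
    rw [e11, e12, e21, e22]
  have step : (Matrix.fromBlocks A A (-B) B).det =
      (Matrix.fromBlocks A 0 (-B) (B + B)).det := by
    have := congrArg Matrix.det hmul
    rw [Matrix.det_mul, Matrix.det_fromBlocks_zero₂₁] at this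
    simpa using this
  rw [step, Matrix.det_fromBlocks_zero₁₂, hA, binU_det, one_mul]
  have : B + B = (2 : ℂ) • B := by rw [two_smul]
  rw [this, Matrix.det_smul, hB, binU_det, mul_one, Fintype.card_fin]
end

section
/- Let n ≥ 1 and λ₀ ∈ ℂ, and let M(λ₀) be the binomial matrix defined below. Then the determinant of the 2n×2n submatrix M₁ of M(λ₀) consisting of its columns 1, 2, …, 2n−1, 2n+1 equals 2^{n−1}·n·(λ₀ − λ₀̄). -/
namespace Stmt5X
open Matrix Finset



/-- interleaving equivalence: (parity, block) ↦ 2*block+parity -/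
def e2 (n : ℕ) : Fin 2 × Fin n ≃ Fin (2*n) where
  toFun p := ⟨2 * (p.2 : ℕ) + (p.1 : ℕ), by omega⟩
  invFun r := (⟨(r : ℕ) % 2, by omega⟩, ⟨(r : ℕ) / 2, by omega⟩)
  left_inv := by
    rintro ⟨ε, k⟩
    have h1 : (ε : ℕ) < 2 := ε.2
    ext <;> simp <;> omega
  right_inv := by
    rintro r
    ext
    simp
    omega

noncomputable def Bm (n : ℕ) (l : ℂ) : Fin n → Matrix (Fin 2) (Fin 2) ℂ :=
  fun k => if (k : ℕ) = n - 1 then !![1, (n:ℂ)*l; -1, -((n:ℂ) * starRingEnd ℂ l)]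
           else !![1, 1; -1, 1]

noncomputable def Sm (n : ℕ) (l : ℂ) : Matrix (Fin (2*n)) (Fin (2*n)) ℂ :=
  (Matrix.blockDiagonal (Bm n l)).submatrix (e2 n).symm (e2 n).symm

lemma Sm_apply (n : ℕ) (l : ℂ) (r c : Fin (2*n)) :
    Sm n l r c =
      if (r:ℕ)/2 = (c:ℕ)/2 then
        (if (c:ℕ) % 2 = 0 then (if (r:ℕ) % 2 = 0 then 1 else -1)
         else if (c:ℕ)/2 = n - 1 then
           (if (r:ℕ) % 2 = 0 then (n:ℂ)*l else -((n:ℂ) * starRingEnd ℂ l))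
         else 1)
      else 0 := by
  unfold Sm e2 Bm
  simp only [Matrix.submatrix_apply, Equiv.coe_fn_symm_mk, Matrix.blockDiagonal_apply]
  rcases Nat.mod_two_eq_zero_or_one (r:ℕ) with hr | hr <;>
    rcases Nat.mod_two_eq_zero_or_one (c:ℕ) with hc | hc <;>
      by_cases hd : (c:ℕ)/2 = n-1 <;>
        by_cases he : (r:ℕ)/2 = (c:ℕ)/2 <;>
          simp [hr, hc, he, hd, Fin.mk.injEq] <;>
            rw [if_neg (by omega), if_neg (by omega)]


lemma det_Sm (n : ℕ) (hn : 1 ≤ n) (l : ℂ) :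
    (Sm n l).det = (2:ℂ)^(n-1) * ((n:ℂ) * l - (n:ℂ) * starRingEnd ℂ l) := by
  unfold Sm
  rw [Matrix.det_submatrix_equiv_self, Matrix.det_blockDiagonal]
  have hdet : ∀ k : Fin n, (Bm n l k).det =
      if (k:ℕ) = n - 1 then (n:ℂ) * l - (n:ℂ) * starRingEnd ℂ l else 2 := by
    intro k
    unfold Bm
    by_cases hk : (k:ℕ) = n - 1 <;> simp [hk, Matrix.det_fin_two_of] <;> ring
  simp only [hdet]
  rw [Fin.prod_univ_eq_prod_range (fun k => if k = n - 1 then (n:ℂ) * l - (n:ℂ) * starRingEnd ℂ l else 2)]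
  have hn' : n = (n-1) + 1 := by omega
  rw [hn', Finset.prod_range_succ]
  rw [Finset.prod_congr rfl (fun k hk => if_neg (by simp at hk; omega))]
  simp [hn'.symm]

noncomputable def Lm (n : ℕ) (l : ℂ) : Matrix (Fin (2*n)) (Fin (2*n)) ℂ :=
  Matrix.of fun r c =>
    if (r:ℕ) % 2 = (c:ℕ) % 2 then
      (Nat.choose ((c:ℕ)/2) ((r:ℕ)/2) : ℂ) *
        (if (r:ℕ) % 2 = 0 then l else starRingEnd ℂ l) ^ ((c:ℕ)/2 - (r:ℕ)/2)
    else 0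

lemma det_Lm (n : ℕ) (l : ℂ) : (Lm n l).det = 1 := by
  rw [Matrix.det_of_upperTriangular (M := Lm n l)]
  · apply Finset.prod_eq_one
    intro r _
    simp [Lm]
  · intro i j hij
    simp only [Lm, Matrix.of_apply]
    by_cases hp : (i:ℕ) % 2 = (j:ℕ) % 2
    · rw [if_pos hp]
      have : (j:ℕ)/2 < (i:ℕ)/2 := by
        have : (j:ℕ) < (i:ℕ) := hij
        omega
      simp [Nat.choose_eq_zero_of_lt this]
    · rw [if_neg hp]

noncomputable def av (n : ℕ) (l : ℂ) (k : ℕ) : ℂ := -((Nat.choose n k : ℂ) * (-l)^(n-k))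
noncomputable def bv (n : ℕ) (l : ℂ) (k : ℕ) : ℂ := (Nat.choose n k : ℂ) * (-(starRingEnd ℂ l))^(n-k)

noncomputable def uu (n : ℕ) (l : ℂ) (r : Fin (2*n)) : ℂ :=
  if (r:ℕ)/2 = n - 1 then 0 else
    if (r:ℕ) % 2 = 0 then (av n l ((r:ℕ)/2) - bv n l ((r:ℕ)/2))/2
    else (av n l ((r:ℕ)/2) + bv n l ((r:ℕ)/2))/2

noncomputable def Um (n : ℕ) (l : ℂ) : Matrix (Fin (2*n)) (Fin (2*n)) ℂ :=
  Matrix.of fun r c => if r = c then 1 else if (c:ℕ) = 2*n - 1 then uu n l r else 0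

lemma det_Um (n : ℕ) (l : ℂ) : (Um n l).det = 1 := by
  rw [Matrix.det_of_upperTriangular (M := Um n l)]
  · apply Finset.prod_eq_one
    intro r _
    simp [Um]
  · intro i j hij
    have h3 : (j:ℕ) < (i:ℕ) := by simpa using hij
    have h1 : ¬ (i = j) := by intro h; rw [h] at h3; omega
    have h2 : ¬ ((j:ℕ) = 2*n - 1) := by
      have h3 : (j:ℕ) < (i:ℕ) := by simpa using hij
      have h4 : (i:ℕ) < 2*n := i.2
      omega
    simp [Um, h1, h2]


lemma key_int (m n : ℕ) (h : m < n) :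
    (∑ k ∈ Finset.range n, (-1:ℤ)^(n-k) * (Nat.choose n k * Nat.choose k m)) =
      -(Nat.choose n m) := by
  have hfull : (∑ k ∈ Finset.range (n+1), (-1:ℤ)^(n-k) * (Nat.choose n k * Nat.choose k m)) = 0 := by
    have hsub : (∑ k ∈ Finset.range (n+1), (-1:ℤ)^(n-k) * (Nat.choose n k * Nat.choose k m))
        = ∑ k ∈ Finset.Ico m (n+1), (-1:ℤ)^(n-k) * (Nat.choose n k * Nat.choose k m) := by
      rw [Finset.range_eq_Ico]
      refine (Finset.sum_subset (Finset.Ico_subset_Ico (Nat.zero_le m) le_rfl) ?_).symm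
      intro k hk hk2
      simp only [Finset.mem_Ico] at hk hk2
      have : Nat.choose k m = 0 := Nat.choose_eq_zero_of_lt (by omega)
      simp [this]
    rw [hsub, Finset.sum_Ico_eq_sum_range]
    have hterm : ∀ j ∈ Finset.range (n+1-m),
        (-1:ℤ)^(n-(m+j)) * (Nat.choose n (m+j) * Nat.choose (m+j) m)
        = ((-1:ℤ)^(n-m) * Nat.choose n m) * ((-1:ℤ)^j * Nat.choose (n-m) j) := by
      intro j hj
      simp only [Finset.mem_range] at hj
      have h1 : Nat.choose n (m+j) * Nat.choose (m+j) m
          = Nat.choose n m * Nat.choose (n-m) j := by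
        have := Nat.choose_mul (n := n) (k := m + j) (s := m) (by omega)
        simpa using this
      have hone : (-1:ℤ)^j * (-1:ℤ)^j = 1 := by
        rw [← pow_add, ← two_mul, pow_mul]; norm_num
      have hx : n - m = (n-(m+j)) + j := by omega
      have h2 : (-1:ℤ)^(n-(m+j)) = (-1:ℤ)^(n-m) * (-1:ℤ)^j := by
        rw [hx, pow_add, mul_assoc, hone, mul_one]
      rw [h2]
      have h1' : ((Nat.choose n (m+j) : ℤ)) * ((Nat.choose (m+j) m : ℤ))
          = (Nat.choose n m : ℤ) * ((Nat.choose (n-m) j : ℤ)) := by exact_mod_cast h1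
      rw [h1']
      ring
    rw [Finset.sum_congr rfl hterm, ← Finset.mul_sum]
    have hnm : n + 1 - m = (n - m) + 1 := by omega
    rw [hnm, Int.alternating_sum_range_choose_of_ne (by omega), mul_zero]
  rw [Finset.sum_range_succ] at hfull
  simp only [Nat.sub_self, pow_zero, Nat.choose_self, one_mul] at hfull
  omega

lemma key_c (n m : ℕ) (h : m < n) (t : ℂ) :
    ∑ k ∈ Finset.range n,
        (Nat.choose k m : ℂ) * t^(k-m) * ((Nat.choose n k : ℂ) * (-t)^(n-k))
      = -((Nat.choose n m : ℂ) * t^(n-m)) := by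
  have hterm : ∀ k ∈ Finset.range n,
      (Nat.choose k m : ℂ) * t^(k-m) * ((Nat.choose n k : ℂ) * (-t)^(n-k))
      = ((-1:ℂ)^(n-k) * ((Nat.choose n k * Nat.choose k m : ℕ) : ℂ)) * t^(n-m) := by
    intro k hk; simp only [Finset.mem_range] at hk
    by_cases hkm : m ≤ k
    · have h1 : (-t)^(n-k) = (-1:ℂ)^(n-k) * t^(n-k) := by rw [neg_pow]
      have h2 : t^(k-m) * t^(n-k) = t^(n-m) := by
        rw [← pow_add]; congr 1; omega
      rw [h1, show (Nat.choose k m : ℂ) * t^(k-m) *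
            ((Nat.choose n k : ℂ) * ((-1:ℂ)^(n-k) * t^(n-k)))
          = ((-1:ℂ)^(n-k) * ((Nat.choose n k : ℂ) * (Nat.choose k m : ℂ)))
              * (t^(k-m) * t^(n-k)) from by ring, h2]
      push_cast
      ring
    · have hz : Nat.choose k m = 0 := Nat.choose_eq_zero_of_lt (by omega)
      simp [hz]
  rw [Finset.sum_congr rfl hterm, ← Finset.sum_mul]
  have hsum : (∑ k ∈ Finset.range n,
      ((-1:ℂ)^(n-k) * ((Nat.choose n k * Nat.choose k m : ℕ) : ℂ)))
      = -(Nat.choose n m : ℂ) := by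
    exact_mod_cast key_int m n h
  rw [hsum]
  ring


noncomputable def LSval (n : ℕ) (l : ℂ) (r j : Fin (2*n)) : ℂ :=
  (Nat.choose ((j:ℕ)/2) ((r:ℕ)/2) : ℂ) *
    (if (r:ℕ) % 2 = 0 then l else starRingEnd ℂ l) ^ ((j:ℕ)/2 - (r:ℕ)/2) *
    (if (j:ℕ) % 2 = 0 then (if (r:ℕ) % 2 = 0 then 1 else -1)
     else if (j:ℕ)/2 = n - 1 then
       (if (r:ℕ) % 2 = 0 then (n:ℂ)*l else -((n:ℂ) * starRingEnd ℂ l))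
     else 1)

lemma LS_apply (n : ℕ) (l : ℂ) (r j : Fin (2*n)) :
    (Lm n l * Sm n l) r j = LSval n l r j := by
  rw [Matrix.mul_apply]
  have hr2 : (r:ℕ) < 2*n := r.2
  have hj2 : (j:ℕ) < 2*n := j.2
  set i0 : Fin (2*n) := ⟨2*((j:ℕ)/2) + (r:ℕ)%2, by omega⟩ with hi0
  rw [Finset.sum_eq_single i0]
  · have e1 : (i0:ℕ) % 2 = (r:ℕ) % 2 := by simp [hi0]
    have e2 : (i0:ℕ) / 2 = (j:ℕ)/2 := by simp [hi0]; omega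
    rw [Sm_apply]
    simp only [Lm, Matrix.of_apply, e1, e2, if_pos rfl]
    unfold LSval
    simp
  · intro i _ hne
    by_cases hp : (r:ℕ)%2 = (i:ℕ)%2
    · by_cases hq : (i:ℕ)/2 = (j:ℕ)/2
      · exact absurd (by ext; simp [hi0]; omega : i = i0) hne
      · rw [Sm_apply, if_neg hq, mul_zero]
    · simp only [Lm, Matrix.of_apply, if_neg hp, zero_mul]
  · intro h; exact absurd (Finset.mem_univ i0) h

lemma LSval_at (n : ℕ) (l : ℂ) (r : Fin (2*n)) (k δ : ℕ) (hδ : δ < 2) (h : 2*k+δ < 2*n) :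
    LSval n l r ⟨2*k+δ, h⟩ =
      (Nat.choose k ((r:ℕ)/2) : ℂ) *
        (if (r:ℕ)%2 = 0 then l else starRingEnd ℂ l)^(k - (r:ℕ)/2) *
      (if δ = 0 then (if (r:ℕ)%2 = 0 then (1:ℂ) else -1)
       else if k = n-1 then
         (if (r:ℕ)%2 = 0 then (n:ℂ)*l else -((n:ℂ)*starRingEnd ℂ l))
       else 1) := by
  unfold LSval
  have h1 : (2*k+δ)/2 = k := by omega
  have h2 : (2*k+δ)%2 = δ := by omega
  simp only [Fin.val_mk, h1, h2]

lemma uu_at (n : ℕ) (l : ℂ) (k δ : ℕ) (hδ : δ < 2) (h : 2*k+δ < 2*n) :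
    uu n l ⟨2*k+δ, h⟩ =
      if k = n-1 then 0
      else if δ = 0 then (av n l k - bv n l k)/2 else (av n l k + bv n l k)/2 := by
  unfold uu
  have h1 : (2*k+δ)/2 = k := by omega
  have h2 : (2*k+δ)%2 = δ := by omega
  simp only [Fin.val_mk, h1, h2]


lemma total_sum (n : ℕ) (hn : 1 ≤ n) (l : ℂ) (r : Fin (2*n)) :
    (∑ j : Fin (2*n), LSval n l r j * uu n l j)
        + LSval n l r ⟨2*n-1, by omega⟩ =
      if (r:ℕ)%2 = 0 then (Nat.choose n ((r:ℕ)/2) : ℂ) * l^(n - (r:ℕ)/2)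
      else -((Nat.choose n ((r:ℕ)/2) : ℂ) * (starRingEnd ℂ l)^(n - (r:ℕ)/2)) := by
  have hr2 : (r:ℕ) < 2*n := r.2
  set m := (r:ℕ)/2 with hm
  have hmn : m < n := by omega
  set t : ℂ := if (r:ℕ)%2 = 0 then l else starRingEnd ℂ l with ht
  set sv : ℕ → ℂ := fun k => if (r:ℕ)%2 = 0 then av n l k else bv n l k with hsv
  set g : ℕ → ℂ := fun k =>
    (Nat.choose k m : ℂ) * t^(k-m) * (if k = n-1 then 0 else sv k) with hg
  have hsplit : ∀ f : ℕ → ℂ,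
      ∑ k ∈ Finset.range n, f k = (∑ k ∈ Finset.range (n-1), f k) + f (n-1) := by
    intro f
    conv_lhs => rw [show n = (n-1)+1 from by omega]
    exact Finset.sum_range_succ f (n-1)
  have step1 : (∑ j : Fin (2*n), LSval n l r j * uu n l j)
      = ∑ k ∈ Finset.range n, g k := by
    rw [← Equiv.sum_comp (e2 n) (fun j => LSval n l r j * uu n l j)]
    rw [Fintype.sum_prod_type, Fin.sum_univ_two, ← Finset.sum_add_distrib]
    have hkk : ∀ kk : Fin n,
        (LSval n l r (e2 n (0, kk)) * uu n l (e2 n (0, kk))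
          + LSval n l r (e2 n (1, kk)) * uu n l (e2 n (1, kk))) = g (kk:ℕ) := by
      intro kk
      have hk2 : (kk:ℕ) < n := kk.2
      have he0 : e2 n ((0 : Fin 2), kk) = ⟨2*(kk:ℕ)+0, by omega⟩ := by
        ext; simp [e2]
      have he1 : e2 n ((1 : Fin 2), kk) = ⟨2*(kk:ℕ)+1, by omega⟩ := by
        ext; simp [e2]
      rw [he0, he1, LSval_at n l r _ 0 (by omega) (by omega),
          LSval_at n l r _ 1 (by omega) (by omega),
          uu_at n l _ 0 (by omega) (by omega), uu_at n l _ 1 (by omega) (by omega)]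
      by_cases hk : (kk:ℕ) = n-1
      · simp [hg, hk]
      · by_cases hrp : (r:ℕ)%2 = 0 <;>
          simp [hg, hk, hrp, hsv, ht] <;> ring
    rw [Finset.sum_congr rfl (fun kk _ => hkk kk)]
    exact Fin.sum_univ_eq_sum_range g n
  have step2 : LSval n l r ⟨2*n-1, by omega⟩
      = (Nat.choose (n-1) m : ℂ) * t^(n-1-m) *
        (if (r:ℕ)%2 = 0 then (n:ℂ)*l else -((n:ℂ)*starRingEnd ℂ l)) := by
    have hx : (⟨2*n-1, by omega⟩ : Fin (2*n)) = ⟨2*(n-1)+1, by omega⟩ := by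
      ext; simp; omega
    rw [hx, LSval_at n l r (n-1) 1 (by omega) (by omega)]
    by_cases hrp : (r:ℕ)%2 = 0 <;> simp [ht, hrp] <;> exact Or.inl rfl
  have hchoose : Nat.choose n (n-1) = n := by
    have h1 : n.choose (n - 1) = n.choose 1 := by
      rw [← Nat.choose_symm (by omega : 1 ≤ n)]
    rw [h1, Nat.choose_one_right]
  have hsv_last : sv (n-1)
      = (if (r:ℕ)%2 = 0 then (n:ℂ)*l else -((n:ℂ)*starRingEnd ℂ l)) := by
    have hp : n - (n-1) = 1 := by omega
    by_cases hrp : (r:ℕ)%2 = 0 <;> simp [hsv, av, bv, hchoose, hp, hrp] <;> ring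
  have combine : (∑ k ∈ Finset.range n, g k)
        + LSval n l r ⟨2*n-1, by omega⟩
      = ∑ k ∈ Finset.range n, (Nat.choose k m : ℂ) * t^(k-m) * sv k := by
    rw [step2, ← hsv_last, hsplit g,
        hsplit (fun k => (Nat.choose k m : ℂ) * t^(k-m) * sv k)]
    have gl : g (n-1) = 0 := by simp [hg]
    rw [gl, add_zero]
    congr 1
    apply Finset.sum_congr rfl
    intro k hk
    simp only [Finset.mem_range] at hk
    simp [hg, show ¬ (k = n-1) from by omega]
  rw [step1, combine]
  by_cases hrp : (r:ℕ)%2 = 0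
  · rw [if_pos hrp]
    have hterm : ∀ k ∈ Finset.range n,
        (Nat.choose k m : ℂ) * t^(k-m) * sv k
        = -((Nat.choose k m : ℂ) * l^(k-m) * ((Nat.choose n k : ℂ) * (-l)^(n-k))) := by
      intro k _
      simp only [hsv, ht, if_pos hrp, av]
      ring
    rw [Finset.sum_congr rfl hterm, Finset.sum_neg_distrib, key_c n m hmn l]
    ring
  · rw [if_neg hrp]
    have hterm : ∀ k ∈ Finset.range n,
        (Nat.choose k m : ℂ) * t^(k-m) * sv k
        = (Nat.choose k m : ℂ) * (starRingEnd ℂ l)^(k-m)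
            * ((Nat.choose n k : ℂ) * (-(starRingEnd ℂ l))^(n-k)) := by
      intro k _
      simp only [hsv, ht, if_neg hrp, bv]
    rw [Finset.sum_congr rfl hterm, key_c n m hmn (starRingEnd ℂ l)]


lemma main_eq (n : ℕ) (hn : 1 ≤ n) (l : ℂ) :
    (Matrix.of fun i (j : Fin (2*n)) =>
        if (j : ℕ) + 1 = 2*n then binM n l i (Fin.last (2*n))
        else binM n l i j.castSucc) = Lm n l * Sm n l * Um n l := by
  ext r c
  rw [Matrix.mul_apply]
  simp only [LS_apply]
  have hr2 : (r:ℕ) < 2*n := r.2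
  have hc2 : (c:ℕ) < 2*n := c.2
  by_cases hc : (c:ℕ) = 2*n - 1
  · have hceq : c = (⟨2*n-1, by omega⟩ : Fin (2*n)) := by ext; simp; omega
    have hUm : ∀ j, Um n l j c = (if j = c then (1:ℂ) else 0) + uu n l j := by
      intro j
      by_cases hj : j = c
      · rw [hj]
        have huuc : uu n l c = 0 := by
          unfold uu
          rw [if_pos (by omega : (c:ℕ)/2 = n-1)]
        simp [Um, huuc]
      · simp [Um, hj, hc]
    have hsum : (∑ j, LSval n l r j * Um n l j c)
        = LSval n l r c + ∑ j, LSval n l r j * uu n l j := by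
      simp only [hUm, mul_add, Finset.sum_add_distrib, mul_ite, mul_one, mul_zero]
      rw [Finset.sum_ite_eq' Finset.univ c (fun j => LSval n l r j)]
      simp
    rw [hsum, add_comm (LSval n l r c), hceq, total_sum n hn l r]
    simp only [Matrix.of_apply]
    rw [if_pos (show ((⟨2*n-1, by omega⟩ : Fin (2*n)) : ℕ) + 1 = 2*n by simp; omega)]
    unfold binM
    simp only [Matrix.of_apply, Fin.val_last, if_pos rfl]
    simp
  · rw [Finset.sum_eq_single c]
    · have hUcc : Um n l c c = 1 := by simp [Um]
      rw [hUcc, mul_one]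
      have hcond : ¬ ((c:ℕ) + 1 = 2*n) := by omega
      simp only [Matrix.of_apply, if_neg hcond]
      unfold binM LSval
      have hcc : ((c.castSucc : Fin (2*n+1)) : ℕ) = (c:ℕ) := rfl
      simp only [Matrix.of_apply, hcc]
      rw [if_neg (show ¬ ((c:ℕ) = 2*n) from by omega)]
      rcases Nat.mod_two_eq_zero_or_one (r:ℕ) with hr | hr <;>
        rcases Nat.mod_two_eq_zero_or_one (c:ℕ) with hcp | hcp
      · simp [hr, hcp]; try ring
      · simp [hr, hcp, show ¬((c:ℕ)/2 = n-1) from by omega]; try ring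
      · simp [hr, hcp]; try ring
      · simp [hr, hcp, show ¬((c:ℕ)/2 = n-1) from by omega]; try ring
    · intro j _ hj
      have : Um n l j c = 0 := by
        simp [Um, hj, hc]
      rw [this, mul_zero]
    · intro h; exact absurd (Finset.mem_univ c) h

theorem stmt5' (n : ℕ) (hn : 1 ≤ n) (l : ℂ) :
    Matrix.det (Matrix.of fun i (j : Fin (2*n)) =>
        if (j : ℕ) + 1 = 2*n then binM n l i (Fin.last (2*n))
        else binM n l i j.castSucc) =
      (2 : ℂ) ^ (n-1) * (n : ℂ) * (l - starRingEnd ℂ l) := by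
  rw [main_eq n hn l, Matrix.det_mul, Matrix.det_mul, det_Lm, det_Um, det_Sm n hn l]
  ring



end Stmt5X

/-- The determinant of the `2n × 2n` submatrix `M₁` of `M(λ₀)` consisting of
its columns `1, …, 2n−1, 2n+1` equals `2^(n−1)·n·(λ₀ − conj λ₀)`. -/


theorem stmt5 (n : ℕ) (hn : 1 ≤ n) (l : ℂ) :
    Matrix.det (Matrix.of fun i (j : Fin (2*n)) =>
        if (j : ℕ) + 1 = 2*n then binM n l i (Fin.last (2*n))
        else binM n l i j.castSucc) =
      (2 : ℂ) ^ (n-1) * (n : ℂ) * (l - starRingEnd ℂ l) := by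
  exact Stmt5X.stmt5' n hn l
end

section
/- Let n ≥ 1, let c > 0 and a ∈ ℝ, and set λ₀ = −a/2 + ic. For the binomial matrix M(λ₀) defined below, Cramer(M(λ₀)) = n·i·c (more generally, for arbitrary λ₀ ∈ ℂ one has Cramer(M(λ₀)) = (n/2)·(λ₀ − λ₀̄)). -/
/-- For a `2n × (2n+1)` complex matrix `Δ`, `cramerFn n Δ = det Δ₁ / det Δ₂`,
where `Δ₁` consists of columns `1,…,2n−1,2n+1` and `Δ₂` of columns `1,…,2n`. -/
noncomputable def cramerFn (n : ℕ) (Δ : Matrix (Fin (2*n)) (Fin (2*n+1)) ℂ) : ℂ :=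
  Matrix.det (Matrix.of fun i (j : Fin (2*n)) =>
      if (j : ℕ) + 1 = 2*n then Δ i (Fin.last (2*n)) else Δ i j.castSucc) /
  Matrix.det (Matrix.of fun i (j : Fin (2*n)) => Δ i j.castSucc)


open Finset Matrix
namespace Stmt6Aux

def pe (n : ℕ) : Fin n × Fin 2 ≃ Fin (2*n) where
  toFun p := ⟨2 * p.1.1 + p.2.1, by have := p.1.2; have := p.2.2; omega⟩
  invFun i := (⟨i.1 / 2, by have := i.2; omega⟩, ⟨i.1 % 2, by omega⟩)
  left_inv p := by
    obtain ⟨⟨a, ha⟩, ⟨b, hb⟩⟩ := p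
    have h1 : (2*a+b)/2 = a := by omega
    have h2 : (2*a+b)%2 = b := by omega
    simp [h1, h2]
  right_inv i := by
    obtain ⟨i, hi⟩ := i
    simp
    omega

@[simp] lemma pe_val (n : ℕ) (p : Fin n × Fin 2) : ((pe n p : Fin (2*n)) : ℕ) = 2 * p.1.1 + p.2.1 := rfl

lemma altsum (n m : ℕ) (hm : m < n) :
    ∑ k ∈ range n, (-1:ℤ)^(n+k+1) * (n.choose k) * (k.choose m) = n.choose m := by
  have hU : ∑ k ∈ range (n+1), (-1:ℤ)^k * (n.choose k) * (k.choose m) = 0 := by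
    have h1 : ∑ k ∈ range (n+1), (-1:ℤ)^k * (n.choose k) * (k.choose m)
        = ∑ k ∈ Finset.Ico m (n+1), (-1:ℤ)^k * (n.choose k) * (k.choose m) := by
      symm
      apply Finset.sum_subset
      · intro x hx; simp only [Finset.mem_Ico] at hx; simp only [Finset.mem_range]; omega
      · intro x hx hx'
        simp only [Finset.mem_range] at hx
        simp only [Finset.mem_Ico] at hx'
        have hxm : x < m := by omega
        simp [Nat.choose_eq_zero_of_lt hxm]
    rw [h1, Finset.sum_Ico_eq_sum_range]
    have h2 : ∀ j ∈ range (n+1-m), (-1:ℤ)^(m+j) * (n.choose (m+j)) * ((m+j).choose m)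
        = ((-1:ℤ)^m * n.choose m) * ((-1:ℤ)^j * ((n-m).choose j)) := by
      intro j hj
      simp only [Finset.mem_range] at hj
      have hkn : m + j ≤ n := by omega
      have hsk : m ≤ m + j := by omega
      have h0 := Nat.choose_mul (n := n) hsk
      have hsub : m + j - m = j := by omega
      rw [hsub] at h0
      have hz : ((n.choose (m+j)) * ((m+j).choose m) : ℤ) = (n.choose m) * ((n-m).choose j) := by
        exact_mod_cast h0
      rw [pow_add]
      linear_combination ((-1:ℤ)^m * (-1:ℤ)^j) * hz
    rw [Finset.sum_congr rfl h2, ← Finset.mul_sum]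
    have hn1m : n + 1 - m = (n - m) + 1 := by omega
    rw [hn1m, Int.alternating_sum_range_choose_of_ne (by omega : n - m ≠ 0), mul_zero]
  have hsplit := Finset.sum_range_succ (fun k => (-1:ℤ)^k * (n.choose k) * (k.choose m)) n
  rw [hsplit] at hU
  have hS : ∑ k ∈ range n, (-1:ℤ)^k * (n.choose k) * (k.choose m)
      = -((-1:ℤ)^n * (n.choose m)) := by
    simp only [Nat.choose_self, Nat.cast_one, mul_one] at hU ⊢
    linarith
  have hfact : ∀ k, (-1:ℤ)^(n+k+1) = ((-1:ℤ)^(n+1)) * (-1:ℤ)^k := by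
    intro k; rw [← pow_add]; ring_nf
  calc ∑ k ∈ range n, (-1:ℤ)^(n+k+1) * (n.choose k) * (k.choose m)
      = ((-1:ℤ)^(n+1)) * ∑ k ∈ range n, (-1:ℤ)^k * (n.choose k) * (k.choose m) := by
        rw [Finset.mul_sum]; apply Finset.sum_congr rfl; intro k _; rw [hfact]; ring
    _ = ((-1:ℤ)^(n+1)) * (-((-1:ℤ)^n * (n.choose m))) := by rw [hS]
    _ = ((-1:ℤ)^n * (-1:ℤ)^n) * (n.choose m) := by ring
    _ = n.choose m := by rw [← pow_add, ← two_mul, pow_mul]; norm_num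


noncomputable def uk (n : ℕ) (z : ℂ) (k : ℕ) : ℂ :=
  (-1:ℂ)^(n+k+1) * (n.choose k) * z^(n-k)

lemma keyC (n m : ℕ) (hm : m < n) (z : ℂ) :
    ∑ k : Fin n, ((k:ℕ).choose m : ℂ) * z^((k:ℕ)-m) * uk n z (k:ℕ)
      = (n.choose m : ℂ) * z^(n-m) := by
  rw [Fin.sum_univ_eq_sum_range (fun k => ((k:ℕ).choose m : ℂ) * z^(k-m) * uk n z k)]
  have h : ∀ k ∈ range n, ((k:ℕ).choose m : ℂ) * z^(k-m) * uk n z k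
      = (((-1:ℤ)^(n+k+1) * (n.choose k) * (k.choose m) : ℤ) : ℂ) * z^(n-m) := by
    intro k hk
    simp only [Finset.mem_range] at hk
    rcases lt_or_ge k m with hkm | hkm
    · simp [uk, Nat.choose_eq_zero_of_lt hkm]
    · have he : (k - m) + (n - k) = n - m := by omega
      push_cast
      rw [uk, ← he, pow_add]
      ring
  rw [Finset.sum_congr rfl h, ← Finset.sum_mul, ← Int.cast_sum, altsum n m hm]
  push_cast
  ring

noncomputable def Amat (n : ℕ) (x : ℂ) : Matrix (Fin n) (Fin n) ℂ :=
  Matrix.of fun m k => ((k:ℕ).choose (m:ℕ) : ℂ) * x ^ ((k:ℕ) - (m:ℕ))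

lemma det_Amat (n : ℕ) (x : ℂ) : (Amat n x).det = 1 := by
  rw [Matrix.det_of_upperTriangular]
  · simp [Amat]
  · intro i j hij
    have : (j:ℕ) < (i:ℕ) := hij
    simp [Amat, Nat.choose_eq_zero_of_lt this]

noncomputable def kap : Matrix (Fin 2) (Fin 2) ℂ := !![1,1;-1,1]

lemma det_kap : kap.det = 2 := by
  simp [kap, Matrix.det_fin_two_of]; norm_num

noncomputable def Dm (n : ℕ) (l : ℂ) : Matrix (Fin n × Fin 2) (Fin n × Fin 2) ℂ :=
  Matrix.blockDiagonal (fun r => if r = 0 then Amat n l else Amat n (starRingEnd ℂ l))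

lemma det_Dm (n : ℕ) (l : ℂ) : (Dm n l).det = 1 := by
  rw [Dm, Matrix.det_blockDiagonal, Fin.prod_univ_two]
  simp [det_Amat]

noncomputable def Km (n : ℕ) : Matrix (Fin n × Fin 2) (Fin n × Fin 2) ℂ :=
  (Matrix.blockDiagonal (fun _ : Fin n => kap)).submatrix
    (Equiv.prodComm (Fin n) (Fin 2)) (Equiv.prodComm (Fin n) (Fin 2))

lemma det_Km (n : ℕ) : (Km n).det = 2^n := by
  rw [Km, Matrix.det_submatrix_equiv_self, Matrix.det_blockDiagonal]
  simp [det_kap]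


lemma binM_pe (n : ℕ) (l : ℂ) (m k : Fin n) (r s : Fin 2) :
    binM n l (pe n (m,r)) ((pe n (k,s)).castSucc)
      = (if (r:ℕ) = 0 then ((k:ℕ).choose (m:ℕ) : ℂ) * l^((k:ℕ)-(m:ℕ))
         else if (s:ℕ) = 0 then -(((k:ℕ).choose (m:ℕ) : ℂ) * (starRingEnd ℂ l)^((k:ℕ)-(m:ℕ)))
         else ((k:ℕ).choose (m:ℕ) : ℂ) * (starRingEnd ℂ l)^((k:ℕ)-(m:ℕ))) := by
  obtain ⟨m, hm⟩ := m; obtain ⟨k, hk⟩ := k; obtain ⟨r, hr⟩ := r; obtain ⟨s, hs⟩ := s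
  have hc : ¬ (2*k+s = 2*n) := by omega
  have h2 : (2*k+s)/2 = k := by omega
  have h3 : (2*k+s)%2 = s := by omega
  have h4 : (2*m+r)/2 = m := by omega
  have h5 : (2*m+r)%2 = r := by omega
  simp only [binM, Matrix.of_apply, Fin.coe_castSucc, pe_val, hc, if_false, h2, h3, h4, h5]

lemma binM_pe_last (n : ℕ) (l : ℂ) (m : Fin n) (r : Fin 2) :
    binM n l (pe n (m,r)) (Fin.last (2*n))
      = (if (r:ℕ) = 0 then ((n.choose (m:ℕ)) : ℂ) * l^(n-(m:ℕ))
         else -(((n.choose (m:ℕ)) : ℂ) * (starRingEnd ℂ l)^(n-(m:ℕ)))) := by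
  obtain ⟨m, hm⟩ := m; obtain ⟨r, hr⟩ := r
  have h4 : (2*m+r)/2 = m := by omega
  have h5 : (2*m+r)%2 = r := by omega
  simp only [binM, Matrix.of_apply, Fin.val_last, pe_val, if_true, h4, h5]

lemma decomp (n : ℕ) (l : ℂ) :
    (Matrix.of fun i (j : Fin (2*n)) => binM n l i j.castSucc).submatrix (pe n) (pe n)
      = Dm n l * Km n := by
  ext ⟨m, r⟩ ⟨k, s⟩
  rw [Matrix.mul_apply]
  have hterm : ∀ (k' : Fin n) (r' : Fin 2), Dm n l (m,r) (k',r') * Km n (k',r') (k,s)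
      = (if r' = r then (if k' = k then
          (if r = 0 then Amat n l m k' else Amat n (starRingEnd ℂ l) m k') * kap r s
          else 0) else 0) := by
    intro k' r'
    rw [Dm, Km, Matrix.blockDiagonal_apply, Matrix.submatrix_apply, Matrix.blockDiagonal_apply]
    simp only [Equiv.prodComm_apply, Prod.swap_prod_mk]
    by_cases h1 : r' = r
    · subst h1
      by_cases h2 : k' = k
      · subst h2; simp only [if_pos rfl]; split_ifs <;> rfl
      · have h2' : ¬ k = k' := fun h => h2 h.symm
        simp [h2, h2']
    · have h1' : ¬ r = r' := fun h => h1 h.symm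
      simp [h1, h1']
  rw [Fintype.sum_prod_type]
  simp only [hterm, Finset.sum_ite_eq', Finset.mem_univ, if_true]
  rw [Matrix.submatrix_apply, Matrix.of_apply, binM_pe]
  fin_cases r <;> fin_cases s <;>
    simp [Amat, kap]


lemma det_D2 (n : ℕ) (l : ℂ) :
    (Matrix.of fun i (j : Fin (2*n)) => binM n l i j.castSucc).det = 2^n := by
  rw [← Matrix.det_submatrix_equiv_self (pe n), decomp, Matrix.det_mul, det_Dm, det_Km, one_mul]

noncomputable def xv (n : ℕ) (l : ℂ) : Fin (2*n) → ℂ := fun j =>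
  if (j:ℕ) % 2 = 0 then (uk n l ((j:ℕ)/2) + uk n (starRingEnd ℂ l) ((j:ℕ)/2))/2
  else (uk n l ((j:ℕ)/2) - uk n (starRingEnd ℂ l) ((j:ℕ)/2))/2

lemma xv_pe (n : ℕ) (l : ℂ) (k : Fin n) (s : Fin 2) :
    xv n l (pe n (k,s)) =
      if (s:ℕ) = 0 then (uk n l (k:ℕ) + uk n (starRingEnd ℂ l) (k:ℕ))/2
      else (uk n l (k:ℕ) - uk n (starRingEnd ℂ l) (k:ℕ))/2 := by
  obtain ⟨k, hk⟩ := k; obtain ⟨s, hs⟩ := s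
  have h2 : (2*k+s)/2 = k := by omega
  have h3 : (2*k+s)%2 = s := by omega
  simp only [xv, pe_val, h2, h3]

lemma mulVec_xv (n : ℕ) (l : ℂ) :
    (Matrix.of fun i (j : Fin (2*n)) => binM n l i j.castSucc) *ᵥ xv n l
      = fun i => binM n l i (Fin.last (2*n)) := by
  funext i
  obtain ⟨⟨m, r⟩, rfl⟩ := (pe n).surjective i
  show ∑ j, (Matrix.of fun i (j : Fin (2*n)) => binM n l i j.castSucc) (pe n (m,r)) j * xv n l j = _
  rw [← Equiv.sum_comp (pe n)
    (fun j => (Matrix.of fun i (j : Fin (2*n)) => binM n l i j.castSucc) (pe n (m,r)) j * xv n l j),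
    Fintype.sum_prod_type]
  simp only [Fin.sum_univ_two, Matrix.of_apply, binM_pe, xv_pe, binM_pe_last,
    Fin.val_zero, Fin.val_one]
  norm_num
  fin_cases r
  · simp only [Fin.val_zero]
    norm_num
    rw [← keyC n (m:ℕ) m.isLt l]
    apply Finset.sum_congr rfl
    intro x _
    ring
  · norm_num
    have h := keyC n (m:ℕ) m.isLt (starRingEnd ℂ l)
    rw [← h, ← Finset.sum_neg_distrib]
    apply Finset.sum_congr rfl
    intro x _
    ring


lemma main (n : ℕ) (hn : 1 ≤ n) (l : ℂ) :
    cramerFn n (binM n l) = ((n:ℂ)/2) * (l - starRingEnd ℂ l) := by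
  have jlt : 2*n-1 < 2*n := by omega
  set M := binM n l with hM
  set D2 : Matrix (Fin (2*n)) (Fin (2*n)) ℂ :=
    Matrix.of (fun i (j : Fin (2*n)) => M i j.castSucc) with hD2
  set jl : Fin (2*n) := ⟨2*n-1, jlt⟩ with hjl
  have hb : D2 *ᵥ xv n l = fun i => M i (Fin.last (2*n)) := mulVec_xv n l
  have hnum : (Matrix.of fun i (j : Fin (2*n)) =>
      if (j:ℕ) + 1 = 2*n then M i (Fin.last (2*n)) else M i j.castSucc)
      = D2.updateCol jl (fun i => M i (Fin.last (2*n))) := by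
    ext i j
    rw [Matrix.updateCol_apply]
    have hiff : ((j:ℕ) + 1 = 2*n) ↔ j = jl := by
      rw [Fin.ext_iff]
      have hv : (jl : ℕ) = 2*n-1 := rfl
      rw [hv]; omega
    simp only [Matrix.of_apply, hD2]
    by_cases h : j = jl
    · rw [if_pos (hiff.mpr h), if_pos h]
    · rw [if_neg (fun hh => h (hiff.mp hh)), if_neg h]
  have hdet2 : D2.det = 2^n := det_D2 n l
  have hcr : D2.cramer (fun i => M i (Fin.last (2*n))) = D2.det • xv n l := by
    rw [← hb, Matrix.cramer_eq_adjugate_mulVec, Matrix.mulVec_mulVec, Matrix.adjugate_mul,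
      Matrix.smul_mulVec, Matrix.one_mulVec]
  have hnumdet : (Matrix.of fun i (j : Fin (2*n)) =>
      if (j:ℕ) + 1 = 2*n then M i (Fin.last (2*n)) else M i j.castSucc).det
      = 2^n * xv n l jl := by
    rw [hnum, ← Matrix.cramer_apply, hcr, hdet2]
    simp
  have hxjl : xv n l jl = ((n:ℂ)/2) * (l - starRingEnd ℂ l) := by
    have h1 : ¬ ((2*n-1) % 2 = 0) := by omega
    have h2 : (2*n-1) / 2 = n-1 := by omega
    have e1 : n+(n-1)+1 = 2*n := by omega
    have e2 : n-(n-1) = 1 := by omega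
    have e3 : n.choose (n-1) = n := by
      have := Nat.choose_symm (show 1 ≤ n from hn)
      rw [this, Nat.choose_one_right]
    show (if (jl:ℕ) % 2 = 0 then _ else _) = _
    simp only [hjl, xv, h1, if_false, h2, uk, e1, e2, e3]
    have : ((-1:ℂ))^(2*n) = 1 := by rw [pow_mul]; norm_num
    rw [this]
    ring
  have h2n : (2:ℂ)^n ≠ 0 := pow_ne_zero n two_ne_zero
  show Matrix.det _ / Matrix.det _ = _
  rw [hnumdet]
  rw [show (Matrix.of fun i (j : Fin (2*n)) => M i j.castSucc) = D2 from rfl]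
  rw [hdet2, mul_div_cancel_left₀ _ h2n, hxjl]

end Stmt6Aux

/-- For `λ₀ = −a/2 + ic`, `Cramer(M(λ₀)) = n·i·c`; more generally, for any
`λ₀ ∈ ℂ`, `Cramer(M(λ₀)) = (n/2)·(λ₀ − conj λ₀)`. -/
theorem stmt6 (n : ℕ) (hn : 1 ≤ n) (c a : ℝ) (hc : 0 < c) :
    cramerFn n (binM n (-(a : ℂ)/2 + Complex.I * c)) = (n : ℂ) * Complex.I * c ∧
    ∀ l : ℂ, cramerFn n (binM n l) = ((n : ℂ)/2) * (l - starRingEnd ℂ l) := by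
  constructor
  · rw [Stmt6Aux.main n hn]
    have hconj : starRingEnd ℂ (-(a : ℂ)/2 + Complex.I * c)
        = -(a : ℂ)/2 - Complex.I * c := by
      simp [map_add, map_neg, map_div₀, Complex.conj_ofReal, Complex.conj_I, map_ofNat]
      ring
    rw [hconj]
    ring
  · exact Stmt6Aux.main n hn
end

section
/- Let n ≥ 1, λ₀ ∈ ℂ, and let (c_k)_{k≥0} be any sequence of complex numbers. Let D be the convolved matrix and M(λ₀) the binomial matrix defined below. Let L be the 2n×2n complex matrix with L_{2m−1,2l−1} = c_{m−l} and L_{2m,2l} = (c_{m−l})̄ for 1 ≤ l ≤ m ≤ n, and all other entries zero. Then D = L·M(λ₀). -/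
/-- The convolved matrix `D` of size `2n × (2n+1)`:
for `1 ≤ m ≤ n`, `1 ≤ k ≤ n`,
`D_{2m−1,2k−1} = D_{2m−1,2k} = Σ_{j=0}^{m−1} C(k−1,j)·λ₀^(k−1−j)·c_{m−1−j}`,
`D_{2m,2k−1} = −Σ_{j=0}^{m−1} C(k−1,j)·conj(λ₀)^(k−1−j)·conj(c_{m−1−j})`,
`D_{2m,2k} = Σ_{j=0}^{m−1} C(k−1,j)·conj(λ₀)^(k−1−j)·conj(c_{m−1−j})`,
with last column
`D_{2m−1,2n+1} = Σ_{j=0}^{m−1} C(n,j)·λ₀^(n−j)·c_{m−1−j}`,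
`D_{2m,2n+1} = −Σ_{j=0}^{m−1} C(n,j)·conj(λ₀)^(n−j)·conj(c_{m−1−j})`. -/
noncomputable def convD (n : ℕ) (l : ℂ) (cs : ℕ → ℂ) :
    Matrix (Fin (2*n)) (Fin (2*n+1)) ℂ :=
  Matrix.of fun r c =>
    let m0 := (r : ℕ) / 2
    if (c : ℕ) = 2*n then
      if (r : ℕ) % 2 = 0 then
        ∑ j ∈ Finset.range (m0+1), (Nat.choose n j : ℂ) * l ^ (n - j) * cs (m0 - j)
      else
        -∑ j ∈ Finset.range (m0+1),
          (Nat.choose n j : ℂ) * (starRingEnd ℂ l) ^ (n - j) * starRingEnd ℂ (cs (m0 - j))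
    else
      let k0 := (c : ℕ) / 2
      if (r : ℕ) % 2 = 0 then
        ∑ j ∈ Finset.range (m0+1), (Nat.choose k0 j : ℂ) * l ^ (k0 - j) * cs (m0 - j)
      else if (c : ℕ) % 2 = 0 then
        -∑ j ∈ Finset.range (m0+1),
          (Nat.choose k0 j : ℂ) * (starRingEnd ℂ l) ^ (k0 - j) * starRingEnd ℂ (cs (m0 - j))
      else
        ∑ j ∈ Finset.range (m0+1),
          (Nat.choose k0 j : ℂ) * (starRingEnd ℂ l) ^ (k0 - j) * starRingEnd ℂ (cs (m0 - j))

/-- The block lower-triangular matrix `L` with `L_{2m−1,2l−1} = c_{m−l}` and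
`L_{2m,2l} = conj(c_{m−l})` for `1 ≤ l ≤ m ≤ n`, all other entries zero. -/
noncomputable def lowerL (n : ℕ) (cs : ℕ → ℂ) : Matrix (Fin (2*n)) (Fin (2*n)) ℂ :=
  Matrix.of fun r c =>
    if (r : ℕ) % 2 = (c : ℕ) % 2 ∧ (c : ℕ)/2 ≤ (r : ℕ)/2 then
      if (r : ℕ) % 2 = 0 then cs ((r : ℕ)/2 - (c : ℕ)/2)
      else starRingEnd ℂ (cs ((r : ℕ)/2 - (c : ℕ)/2))
    else 0

/-- The convolved matrix `D` factors as `L · M(λ₀)`. -/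
theorem stmt7 (n : ℕ) (hn : 1 ≤ n) (l : ℂ) (cs : ℕ → ℂ) :
    convD n l cs = lowerL n cs * binM n l := by
  ext r c
  rw [Matrix.mul_apply]
  have hr2 : (r : ℕ) < 2 * n := r.isLt
  have hb2 : (r : ℕ) % 2 < 2 := Nat.mod_lt _ (by omega)
  set b := (r : ℕ) % 2 with hb
  set m0 := (r : ℕ) / 2 with hm
  have hkey : ∀ j, j ≤ m0 → 2 * j + b < 2 * n := by intro j hj; omega
  set e : ℕ → Fin (2 * n) :=
    fun j => ⟨(2 * j + b) % (2 * n), Nat.mod_lt _ (by omega)⟩ with he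
  have hmod : ∀ j, j ≤ m0 → (2 * j + b) % (2 * n) = 2 * j + b := by
    intro j hj
    exact Nat.mod_eq_of_lt (hkey j hj)
  have heval : ∀ j, j ≤ m0 → ((e j : Fin (2 * n)) : ℕ) = 2 * j + b := by
    intro j hj
    simp only [he]
    exact hmod j hj
  have step1 : ∑ t : Fin (2 * n), lowerL n cs r t * binM n l t c
      = ∑ t ∈ Finset.univ.filter
          (fun t : Fin (2 * n) => b = (t : ℕ) % 2 ∧ (t : ℕ) / 2 ≤ m0),
          lowerL n cs r t * binM n l t c := by
    symm
    apply Finset.sum_filter_of_ne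
    intro t _ hne
    by_contra hP
    apply hne
    have hL : lowerL n cs r t = 0 := by
      simp only [lowerL, Matrix.of_apply, ← hb, ← hm]
      rw [if_neg hP]
    rw [hL, zero_mul]
  have step2 : ∑ t ∈ Finset.univ.filter
          (fun t : Fin (2 * n) => b = (t : ℕ) % 2 ∧ (t : ℕ) / 2 ≤ m0),
          lowerL n cs r t * binM n l t c
      = ∑ j ∈ Finset.range (m0 + 1), lowerL n cs r (e j) * binM n l (e j) c := by
    apply Finset.sum_nbij' (fun t : Fin (2 * n) => (t : ℕ) / 2) e
    · intro t ht
      simp only [Finset.mem_filter] at ht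
      simp only [Finset.mem_range]
      omega
    · intro j hj
      simp only [Finset.mem_range] at hj
      have h1 := heval j (by omega)
      refine Finset.mem_filter.mpr ⟨Finset.mem_univ _, ?_⟩
      rw [h1]
      omega
    · intro t ht
      simp only [Finset.mem_filter] at ht
      apply Fin.ext
      rw [heval _ ht.2.2]
      omega
    · intro j hj
      simp only [Finset.mem_range] at hj
      rw [heval j (by omega)]
      omega
    · intro t ht
      simp only [Finset.mem_filter] at ht
      have h4 : e ((t : ℕ) / 2) = t := by
        apply Fin.ext
        rw [heval _ ht.2.2]
        omega
      rw [h4]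
  rw [step1, step2]
  have hsummand : ∀ j ∈ Finset.range (m0 + 1),
      lowerL n cs r (e j) * binM n l (e j) c
      = (if b = 0 then cs (m0 - j) else starRingEnd ℂ (cs (m0 - j))) *
        (if (c : ℕ) = 2 * n then
          if b = 0 then (Nat.choose n j : ℂ) * l ^ (n - j)
          else -((Nat.choose n j : ℂ) * (starRingEnd ℂ l) ^ (n - j))
         else
          if b = 0 then (Nat.choose ((c : ℕ) / 2) j : ℂ) * l ^ ((c : ℕ) / 2 - j)
          else if (c : ℕ) % 2 = 0 then
            -((Nat.choose ((c : ℕ) / 2) j : ℂ) * (starRingEnd ℂ l) ^ ((c : ℕ) / 2 - j))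
          else (Nat.choose ((c : ℕ) / 2) j : ℂ) * (starRingEnd ℂ l) ^ ((c : ℕ) / 2 - j)) := by
    intro j hj
    simp only [Finset.mem_range] at hj
    have hj' : j ≤ m0 := by omega
    have hme : (2 * j + b) % (2 * n) = 2 * j + b := hmod j hj'
    have h2 : (2 * j + b) % 2 = b := by omega
    have h3 : (2 * j + b) / 2 = j := by omega
    simp only [lowerL, binM, Matrix.of_apply, ← hb, ← hm, hme, heval j hj', h2, h3]
    rw [if_pos (show True ∧ j ≤ m0 from ⟨trivial, hj'⟩)]
  rw [Finset.sum_congr rfl hsummand]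
  simp only [convD, Matrix.of_apply, ← hb, ← hm]
  by_cases hc : (c : ℕ) = 2 * n
  · simp only [if_pos hc]
    rcases Nat.lt_or_ge b 1 with hb0 | hb1
    · have hb0 : b = 0 := by omega
      simp only [hb0, reduceIte]
      exact Finset.sum_congr rfl (fun j _ => by first | ring1 | (split_ifs <;> (first | ring1 | omega | exact (‹False›).elim)))
    · have hb1 : b = 1 := by omega
      simp only [hb1, reduceIte]
      rw [← Finset.sum_neg_distrib]
      exact Finset.sum_congr rfl (fun j _ => by first | ring1 | (split_ifs <;> (first | ring1 | omega | exact (‹False›).elim)))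
  · simp only [if_neg hc]
    rcases Nat.lt_or_ge b 1 with hb0 | hb1
    · have hb0 : b = 0 := by omega
      simp only [hb0, reduceIte]
      exact Finset.sum_congr rfl (fun j _ => by first | ring1 | (split_ifs <;> (first | ring1 | omega | exact (‹False›).elim)))
    · have hb1 : b = 1 := by omega
      simp only [hb1, reduceIte]
      by_cases hc2 : (c : ℕ) % 2 = 0
      · simp only [if_pos hc2]
        rw [← Finset.sum_neg_distrib]
        exact Finset.sum_congr rfl (fun j _ => by first | ring1 | (split_ifs <;> (first | ring1 | omega | exact (‹False›).elim)))
      · simp only [if_neg hc2]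
        exact Finset.sum_congr rfl (fun j _ => by first | ring1 | (split_ifs <;> (first | ring1 | omega | exact (‹False›).elim)))
end

section
/- Let n ≥ 1, λ₀ ∈ ℂ, and let (c_k)_{k≥0} be any sequence of complex numbers with c₀ ≠ 0. For the convolved matrix D defined below, the 2n×2n submatrix D₂ (columns 1,…,2n) has nonzero determinant and Cramer(D) = (n/2)·(λ₀ − λ₀̄); in particular, if λ₀ = −a/2 + ic with a ∈ ℝ and c > 0, then Cramer(D) = n·i·c. -/
namespace S8
open Finset Matrix

/-- interleaving equivalence -/
def ileq (n : ℕ) : Fin n ⊕ Fin n ≃ Fin (2*n) where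
  toFun x := match x with
    | .inl k => ⟨2*(k:ℕ), by have := k.isLt; omega⟩
    | .inr k => ⟨2*(k:ℕ)+1, by have := k.isLt; omega⟩
  invFun j := if (j:ℕ) % 2 = 0 then .inl ⟨(j:ℕ)/2, by have := j.isLt; omega⟩
    else .inr ⟨(j:ℕ)/2, by have := j.isLt; omega⟩
  left_inv x := by
    rcases x with k | k <;> dsimp only
    · rw [if_pos (by omega)]
      exact congrArg Sum.inl (Fin.ext (by show 2*(k:ℕ)/2 = (k:ℕ); omega))
    · rw [if_neg (by omega)]
      exact congrArg Sum.inr (Fin.ext (by show (2*(k:ℕ)+1)/2 = (k:ℕ); omega))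
  right_inv j := by
    by_cases h : (j:ℕ) % 2 = 0
    · show (match (if (j:ℕ) % 2 = 0 then (Sum.inl ⟨(j:ℕ)/2, _⟩ : Fin n ⊕ Fin n) else Sum.inr ⟨(j:ℕ)/2, _⟩) with
        | .inl k => (⟨2*(k:ℕ), _⟩ : Fin (2*n)) | .inr k => ⟨2*(k:ℕ)+1, _⟩) = j
      rw [if_pos h]; exact Fin.ext (by show 2*((j:ℕ)/2) = (j:ℕ); omega)
    · show (match (if (j:ℕ) % 2 = 0 then (Sum.inl ⟨(j:ℕ)/2, _⟩ : Fin n ⊕ Fin n) else Sum.inr ⟨(j:ℕ)/2, _⟩) with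
        | .inl k => (⟨2*(k:ℕ), _⟩ : Fin (2*n)) | .inr k => ⟨2*(k:ℕ)+1, _⟩) = j
      rw [if_neg h]; exact Fin.ext (by show (2*((j:ℕ)/2))+1 = (j:ℕ); omega)

@[simp] lemma ileq_inl (n : ℕ) (k : Fin n) : (ileq n (.inl k) : ℕ) = 2*(k:ℕ) := rfl
@[simp] lemma ileq_inr (n : ℕ) (k : Fin n) : (ileq n (.inr k) : ℕ) = 2*(k:ℕ)+1 := rfl

variable (n : ℕ)

noncomputable def Lmat (g : ℕ → ℂ) : Matrix (Fin n) (Fin n) ℂ :=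
  .of fun m j => if (j:ℕ) ≤ (m:ℕ) then g ((m:ℕ) - (j:ℕ)) else 0
noncomputable def Umat (x : ℂ) : Matrix (Fin n) (Fin n) ℂ :=
  .of fun j k => (Nat.choose (k:ℕ) (j:ℕ) : ℂ) * x ^ ((k:ℕ) - (j:ℕ))
noncomputable def Yst (x : ℂ) : Matrix (Fin n) (Fin n) ℂ :=
  .of fun j k => if (k:ℕ) = n - 1 then (Nat.choose n (j:ℕ) : ℂ) * x ^ (n - (j:ℕ)) else Umat n x j k
noncomputable def Ust (x : ℂ) : Matrix (Fin n) (Fin n) ℂ :=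
  .of fun j k => if (k:ℕ) = n - 1 then -((Nat.choose n (j:ℕ) : ℂ) * x ^ (n - (j:ℕ))) else Umat n x j k
noncomputable def Zst (x d : ℂ) : Matrix (Fin n) (Fin n) ℂ :=
  .of fun j k => if (k:ℕ) = n - 1 then -((Nat.choose n (j:ℕ) : ℂ) * d ^ (n - (j:ℕ))) else 2 * Umat n x j k

lemma pascalC (a b : ℂ) (K j : ℕ) :
    ∑ i ∈ range (K+1), (Nat.choose i j : ℂ) * a ^ (i - j) * ((Nat.choose K i : ℂ) * b ^ (K - i))
      = (Nat.choose K j : ℂ) * (a+b) ^ (K - j) := by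
  by_cases hj : j ≤ K
  · rw [← Finset.sum_subset (fun x hx => Finset.mem_range.2 (by
        simp only [Finset.mem_Ico] at hx; omega) : Finset.Ico j (K+1) ⊆ range (K+1)) ?zero]
    case zero =>
      intro x hx hx'
      simp only [Finset.mem_range] at hx
      simp only [Finset.mem_Ico] at hx'
      have : x < j := by omega
      simp [Nat.choose_eq_zero_of_lt this]
    · rw [Finset.sum_Ico_eq_sum_range]
      have hKj : K + 1 - j = (K - j) + 1 := by omega
      rw [hKj, add_pow, Finset.mul_sum]
      refine Finset.sum_congr rfl ?_
      intro t ht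
      simp only [Finset.mem_range] at ht
      have h1 : j + t ≤ K := by omega
      have h2 : j ≤ j + t := by omega
      have hch : (K.choose (j+t) : ℂ) * ((j+t).choose j : ℂ)
          = (K.choose j : ℂ) * ((K-j).choose t : ℂ) := by
        have hnn := Nat.choose_mul (n := K) h2
        rw [show j + t - j = t by omega] at hnn
        exact_mod_cast congrArg (Nat.cast : ℕ → ℂ) hnn
      have e1 : j + t - j = t := by omega
      have e2 : K - (j + t) = K - j - t := by omega
      rw [e1, e2]
      calc ((j+t).choose j : ℂ) * a ^ t * ((K.choose (j+t) : ℂ) * b ^ (K - j - t))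
          = ((K.choose (j+t) : ℂ) * ((j+t).choose j : ℂ)) * (a ^ t * b ^ (K-j-t)) := by ring
        _ = ((K.choose j : ℂ) * ((K-j).choose t : ℂ)) * (a ^ t * b ^ (K-j-t)) := by rw [hch]
        _ = (K.choose j : ℂ) * (a ^ t * b ^ (K - j - t) * ((K-j).choose t : ℂ)) := by ring
  · have hK : ∀ i ∈ range (K+1),
        (Nat.choose i j : ℂ) * a ^ (i - j) * ((Nat.choose K i : ℂ) * b ^ (K - i)) = 0 := by
      intro i hi
      simp only [Finset.mem_range] at hi
      have : i < j := by omega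
      simp [Nat.choose_eq_zero_of_lt this]
    rw [Finset.sum_eq_zero hK, Nat.choose_eq_zero_of_lt (by omega)]
    simp

lemma pascalC' (a b : ℂ) (j : ℕ) :
    ∑ i ∈ range n, (Nat.choose i j : ℂ) * a ^ (i - j) * ((Nat.choose n i : ℂ) * b ^ (n - i))
      = (Nat.choose n j : ℂ) * (a+b) ^ (n - j) - (Nat.choose n j : ℂ) * a ^ (n - j) := by
  have h := pascalC a b n j
  rw [Finset.sum_range_succ] at h
  simp only [Nat.choose_self, Nat.sub_self, pow_zero, Nat.cast_one, one_mul, mul_one] at h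
  linear_combination h

lemma finsum_to_range (f : ℕ → ℂ) (u : Fin n → ℂ) (h : ∀ i : Fin n, u i = f (i:ℕ)) :
    ∑ i : Fin n, u i = ∑ i ∈ range n, f i := by
  rw [Finset.sum_congr rfl (fun i _ => h i)]
  exact Fin.sum_univ_eq_sum_range f n

lemma Umul_entry (a b : ℂ) (j k : Fin n) :
    (Umat n a * Umat n b) j k = Umat n (a+b) j k := by
  rw [Matrix.mul_apply]
  rw [finsum_to_range n (fun i => (Nat.choose i (j:ℕ) : ℂ) * a ^ (i - (j:ℕ)) *
      ((Nat.choose (k:ℕ) i : ℂ) * b ^ ((k:ℕ) - i))) _ (fun i => by simp [Umat])]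
  rw [← Finset.sum_subset (Finset.range_subset_range.2 (by have := k.isLt; omega) :
      range ((k:ℕ)+1) ⊆ range n) (fun x hx hx' => by
        have : (k:ℕ) < x := by simp only [Finset.mem_range] at hx hx'; omega
        simp [Nat.choose_eq_zero_of_lt this])]
  exact pascalC a b (k:ℕ) (j:ℕ)

lemma Umat_mul (a b : ℂ) : Umat n a * Umat n b = Umat n (a+b) := by
  ext j k; exact Umul_entry n a b j k

lemma ZYU (a b c : ℂ) (hc : c = a + b) :
    Zst n c a - Umat n a * Yst n b = Ust n c := by
  ext j k
  by_cases hk : (k:ℕ) = n - 1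
  · have hmul : (Umat n a * Yst n b) j k
        = (Nat.choose n (j:ℕ) : ℂ) * (a+b) ^ (n - (j:ℕ))
          - (Nat.choose n (j:ℕ) : ℂ) * a ^ (n - (j:ℕ)) := by
      rw [Matrix.mul_apply]
      rw [finsum_to_range n (fun i => (Nat.choose i (j:ℕ) : ℂ) * a ^ (i - (j:ℕ)) *
        ((Nat.choose n i : ℂ) * b ^ (n - i))) _ (fun i => by
          simp only [Umat, Yst, Matrix.of_apply, hk, if_pos])]
      exact pascalC' n a b (j:ℕ)
    simp only [Matrix.sub_apply, hmul, Zst, Ust, Matrix.of_apply, hk, if_pos, hc]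
    ring
  · have hmul : (Umat n a * Yst n b) j k = Umat n (a+b) j k := by
      rw [← Umul_entry n a b j k, Matrix.mul_apply, Matrix.mul_apply]
      refine Finset.sum_congr rfl (fun i _ => ?_)
      simp only [Yst, Matrix.of_apply, hk, if_neg, ite_false]
    simp only [Matrix.sub_apply, hmul, Zst, Ust, Matrix.of_apply, hk, if_neg, ite_false, hc]
    ring

lemma Lmul_entry (g : ℕ → ℂ) (M : Matrix (Fin n) (Fin n) ℂ) (φ : ℕ → ℂ) (m k : Fin n)
    (hφ : ∀ j : Fin n, M j k = φ (j:ℕ)) :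
    (Lmat n g * M) m k = ∑ j ∈ range ((m:ℕ)+1), φ j * g ((m:ℕ) - j) := by
  rw [Matrix.mul_apply]
  rw [finsum_to_range n (fun j => (if j ≤ (m:ℕ) then g ((m:ℕ)-j) else 0) * φ j) _
    (fun i => by rw [hφ i]; simp [Lmat])]
  rw [← Finset.sum_subset (Finset.range_subset_range.2 (by have := m.isLt; omega) :
      range ((m:ℕ)+1) ⊆ range n) (fun x hx hx' => by
        have : ¬ (x ≤ (m:ℕ)) := by simp only [Finset.mem_range] at hx hx'; omega
        simp [this])]
  refine Finset.sum_congr rfl (fun j hj => ?_)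
  simp only [Finset.mem_range] at hj
  rw [if_pos (by omega)]
  ring

lemma det_Lmat (g : ℕ → ℂ) : (Lmat n g).det = g 0 ^ n := by
  rw [Matrix.det_of_lowerTriangular (Lmat n g) (by
    intro i j h
    have hij : i < j := h
    simp only [Lmat, Matrix.of_apply]
    rw [if_neg (by exact_mod_cast Nat.not_le.2 hij)])]
  have : ∀ i : Fin n, Lmat n g i i = g 0 := fun i => by simp [Lmat]
  rw [Finset.prod_congr rfl (fun i _ => this i)]
  simp

lemma det_Umat (x : ℂ) : (Umat n x).det = 1 := by
  rw [Matrix.det_of_upperTriangular (M := Umat n x) (fun i j (h : (j:Fin n) < i) => by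
    simp only [Umat, Matrix.of_apply]
    have : (j:ℕ) < (i:ℕ) := h
    simp [Nat.choose_eq_zero_of_lt this])]
  have : ∀ i : Fin n, Umat n x i i = 1 := fun i => by simp [Umat]
  rw [Finset.prod_congr rfl (fun i _ => this i)]
  simp

lemma det_UU (x : ℂ) : (Umat n x + Umat n x).det = 2 ^ n := by
  rw [Matrix.det_of_upperTriangular (M := Umat n x + Umat n x) (fun i j (h : (j:Fin n) < i) => by
    simp only [Umat, Matrix.add_apply, Matrix.of_apply]
    have : (j:ℕ) < (i:ℕ) := h
    simp [Nat.choose_eq_zero_of_lt this])]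
  have : ∀ i : Fin n, (Umat n x + Umat n x) i i = 2 := fun i => by
    simp [Umat]; ring
  rw [Finset.prod_congr rfl (fun i _ => this i)]
  simp

lemma det_Zst (hn : 1 ≤ n) (x d : ℂ) :
    (Zst n x d).det = -((n:ℂ) * d) * 2 ^ (n-1) := by
  rw [Matrix.det_of_upperTriangular (M := Zst n x d) (fun i j (h : (j:Fin n) < i) => by
    have hji : (j:ℕ) < (i:ℕ) := h
    have hj : ¬ ((j:ℕ) = n - 1) := by have := i.isLt; omega
    simp only [Zst, Umat, Matrix.of_apply, if_neg hj, ite_false]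
    simp [Nat.choose_eq_zero_of_lt hji])]
  set i₀ : Fin n := ⟨n-1, by omega⟩ with hi₀
  rw [← Finset.mul_prod_erase Finset.univ _ (Finset.mem_univ i₀)]
  have h1 : Zst n x d i₀ i₀ = -((n:ℂ) * d) := by
    simp only [Zst, Matrix.of_apply, hi₀, if_pos]
    have : n - (n-1) = 1 := by omega
    rw [Nat.choose_symm (by omega), Nat.choose_one_right, this, pow_one]
  have h2 : ∀ i ∈ Finset.univ.erase i₀, Zst n x d i i = 2 := by
    intro i hi
    have : (i:ℕ) ≠ n - 1 := fun hc => (Finset.mem_erase.1 hi).1 (Fin.ext (by simp [hi₀, hc]))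
    simp only [Zst, Umat, Matrix.of_apply, if_neg this, ite_false]
    simp
  rw [h1, Finset.prod_congr rfl h2, Finset.prod_const]
  congr 1
  rw [Finset.card_erase_of_mem (Finset.mem_univ i₀)]
  simp

section access
variable (l : ℂ) (cs : ℕ → ℂ)

lemma convD_even (m k : Fin n) (c : Fin (2*n+1))
    (hc : (c:ℕ) = 2*(k:ℕ) ∨ (c:ℕ) = 2*(k:ℕ)+1) :
    convD n l cs (ileq n (.inl m)) c
      = ∑ j ∈ range ((m:ℕ)+1), (Nat.choose (k:ℕ) j : ℂ) * l ^ ((k:ℕ) - j) * cs ((m:ℕ) - j) := by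
  have hm := m.isLt; have hk := k.isLt
  simp only [convD, Matrix.of_apply, ileq_inl]
  simp only [show ¬ ((c:ℕ) = 2*n) by omega, show 2*(m:ℕ) % 2 = 0 by omega, if_false, if_true]
  rw [show 2*(m:ℕ)/2 = (m:ℕ) by omega, show (c:ℕ)/2 = (k:ℕ) by omega]

lemma convD_odd_neg (m k : Fin n) (c : Fin (2*n+1)) (hc : (c:ℕ) = 2*(k:ℕ)) :
    convD n l cs (ileq n (.inr m)) c
      = -∑ j ∈ range ((m:ℕ)+1), (Nat.choose (k:ℕ) j : ℂ) * (starRingEnd ℂ l) ^ ((k:ℕ) - j)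
          * starRingEnd ℂ (cs ((m:ℕ) - j)) := by
  have hm := m.isLt; have hk := k.isLt
  simp only [convD, Matrix.of_apply, ileq_inr]
  simp only [show ¬ ((c:ℕ) = 2*n) by omega, show ¬ ((2*(m:ℕ)+1) % 2 = 0) by omega,
    show (c:ℕ) % 2 = 0 by omega, if_false, if_true]
  rw [show (2*(m:ℕ)+1)/2 = (m:ℕ) by omega, show (c:ℕ)/2 = (k:ℕ) by omega]

lemma convD_odd_pos (m k : Fin n) (c : Fin (2*n+1)) (hc : (c:ℕ) = 2*(k:ℕ)+1) :
    convD n l cs (ileq n (.inr m)) c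
      = ∑ j ∈ range ((m:ℕ)+1), (Nat.choose (k:ℕ) j : ℂ) * (starRingEnd ℂ l) ^ ((k:ℕ) - j)
          * starRingEnd ℂ (cs ((m:ℕ) - j)) := by
  have hm := m.isLt; have hk := k.isLt
  simp only [convD, Matrix.of_apply, ileq_inr]
  simp only [show ¬ ((c:ℕ) = 2*n) by omega, show ¬ ((2*(m:ℕ)+1) % 2 = 0) by omega,
    show ¬ ((c:ℕ) % 2 = 0) by omega, if_false, if_true]
  rw [show (2*(m:ℕ)+1)/2 = (m:ℕ) by omega, show (c:ℕ)/2 = (k:ℕ) by omega]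

lemma convD_last_even (m : Fin n) :
    convD n l cs (ileq n (.inl m)) (Fin.last (2*n))
      = ∑ j ∈ range ((m:ℕ)+1), (Nat.choose n j : ℂ) * l ^ (n - j) * cs ((m:ℕ) - j) := by
  have hm := m.isLt
  simp only [convD, Matrix.of_apply, ileq_inl, Fin.val_last]
  simp only [show 2*(m:ℕ) % 2 = 0 by omega, if_true]
  rw [show 2*(m:ℕ)/2 = (m:ℕ) by omega]

lemma convD_last_odd (m : Fin n) :
    convD n l cs (ileq n (.inr m)) (Fin.last (2*n))
      = -∑ j ∈ range ((m:ℕ)+1), (Nat.choose n j : ℂ) * (starRingEnd ℂ l) ^ (n - j)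
          * starRingEnd ℂ (cs ((m:ℕ) - j)) := by
  have hm := m.isLt
  simp only [convD, Matrix.of_apply, ileq_inr, Fin.val_last]
  simp only [show ¬ ((2*(m:ℕ)+1) % 2 = 0) by omega, if_true, if_false]
  rw [show (2*(m:ℕ)+1)/2 = (m:ℕ) by omega]

end access
end S8

open S8 Finset Matrix in
/-- If `c₀ ≠ 0`, the submatrix `D₂` (first `2n` columns of `D`) has nonzero
determinant and `Cramer(D) = (n/2)·(λ₀ − conj λ₀)`; in particular, for
`λ₀ = −a/2 + ic` with `c > 0`, `Cramer(D) = n·i·c`. -/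
theorem stmt8 (n : ℕ) (hn : 1 ≤ n) (l : ℂ) (cs : ℕ → ℂ) (h0 : cs 0 ≠ 0) :
    Matrix.det (Matrix.of fun i (j : Fin (2*n)) => convD n l cs i j.castSucc) ≠ 0 ∧
    cramerFn n (convD n l cs) = ((n : ℂ)/2) * (l - starRingEnd ℂ l) ∧
    ∀ (a c : ℝ), 0 < c → l = -(a : ℂ)/2 + Complex.I * c →
      cramerFn n (convD n l cs) = (n : ℂ) * Complex.I * c := by
  have hdl : (starRingEnd ℂ l - l) + l = starRingEnd ℂ l := by ring
  -- the two factorizations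
  have hprodD : (fromBlocks (Lmat n cs) 0
        (-(Lmat n (fun t => starRingEnd ℂ (cs t)) * Umat n (starRingEnd ℂ l - l)))
        (Lmat n (fun t => starRingEnd ℂ (cs t)))) *
      (fromBlocks (Umat n l) (Umat n l) 0 (Umat n (starRingEnd ℂ l) + Umat n (starRingEnd ℂ l)))
      = fromBlocks (Lmat n cs * Umat n l) (Lmat n cs * Umat n l)
        (-(Lmat n (fun t => starRingEnd ℂ (cs t)) * Umat n (starRingEnd ℂ l)))
        (Lmat n (fun t => starRingEnd ℂ (cs t)) * Umat n (starRingEnd ℂ l)) := by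
    rw [Matrix.fromBlocks_multiply, Matrix.fromBlocks_inj]
    refine ⟨by simp, by simp, ?_, ?_⟩
    · rw [Matrix.mul_zero, add_zero, neg_mul, Matrix.mul_assoc, Umat_mul, hdl]
    · rw [neg_mul, Matrix.mul_assoc, Umat_mul, hdl, Matrix.mul_add]
      abel
  have hprodN : (fromBlocks (Lmat n cs) 0
        (-(Lmat n (fun t => starRingEnd ℂ (cs t)) * Umat n (starRingEnd ℂ l - l)))
        (Lmat n (fun t => starRingEnd ℂ (cs t)))) *
      (fromBlocks (Umat n l) (Yst n l) 0 (Zst n (starRingEnd ℂ l) (starRingEnd ℂ l - l)))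
      = fromBlocks (Lmat n cs * Umat n l) (Lmat n cs * Yst n l)
        (-(Lmat n (fun t => starRingEnd ℂ (cs t)) * Umat n (starRingEnd ℂ l)))
        (Lmat n (fun t => starRingEnd ℂ (cs t)) * Ust n (starRingEnd ℂ l)) := by
    rw [Matrix.fromBlocks_multiply, Matrix.fromBlocks_inj]
    refine ⟨by simp, by simp, ?_, ?_⟩
    · rw [Matrix.mul_zero, add_zero, neg_mul, Matrix.mul_assoc, Umat_mul, hdl]
    · rw [neg_mul, Matrix.mul_assoc, neg_add_eq_sub, ← Matrix.mul_sub,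
        ZYU n (starRingEnd ℂ l - l) l (starRingEnd ℂ l) (by ring)]
  -- denominator equality
  have hDen : (Matrix.of fun i (j : Fin (2*n)) => convD n l cs i j.castSucc).submatrix
        (ileq n) (ileq n)
      = fromBlocks (Lmat n cs * Umat n l) (Lmat n cs * Umat n l)
        (-(Lmat n (fun t => starRingEnd ℂ (cs t)) * Umat n (starRingEnd ℂ l)))
        (Lmat n (fun t => starRingEnd ℂ (cs t)) * Umat n (starRingEnd ℂ l)) := by
    ext i j
    rcases i with m | m <;> rcases j with k | k
    · rw [Matrix.submatrix_apply, Matrix.of_apply, Matrix.fromBlocks_apply₁₁,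
        Lmul_entry n cs _ (fun j => (Nat.choose (k:ℕ) j : ℂ) * l ^ ((k:ℕ)-j)) m k
          (fun j => by simp [Umat]),
        convD_even n l cs m k _ (Or.inl (by simp))]
    · rw [Matrix.submatrix_apply, Matrix.of_apply, Matrix.fromBlocks_apply₁₂,
        Lmul_entry n cs _ (fun j => (Nat.choose (k:ℕ) j : ℂ) * l ^ ((k:ℕ)-j)) m k
          (fun j => by simp [Umat]),
        convD_even n l cs m k _ (Or.inr (by simp))]
    · rw [Matrix.submatrix_apply, Matrix.of_apply, Matrix.fromBlocks_apply₂₁, Matrix.neg_apply,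
        Lmul_entry n _ _ (fun j => (Nat.choose (k:ℕ) j : ℂ) * (starRingEnd ℂ l) ^ ((k:ℕ)-j)) m k
          (fun j => by simp [Umat]),
        convD_odd_neg n l cs m k _ (by simp)]
    · rw [Matrix.submatrix_apply, Matrix.of_apply, Matrix.fromBlocks_apply₂₂,
        Lmul_entry n _ _ (fun j => (Nat.choose (k:ℕ) j : ℂ) * (starRingEnd ℂ l) ^ ((k:ℕ)-j)) m k
          (fun j => by simp [Umat]),
        convD_odd_pos n l cs m k _ (by simp)]
  -- numerator equality
  have hNum : (Matrix.of fun i (j : Fin (2*n)) =>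
        if (j : ℕ) + 1 = 2*n then convD n l cs i (Fin.last (2*n))
        else convD n l cs i j.castSucc).submatrix (ileq n) (ileq n)
      = fromBlocks (Lmat n cs * Umat n l) (Lmat n cs * Yst n l)
        (-(Lmat n (fun t => starRingEnd ℂ (cs t)) * Umat n (starRingEnd ℂ l)))
        (Lmat n (fun t => starRingEnd ℂ (cs t)) * Ust n (starRingEnd ℂ l)) := by
    ext i j
    rcases i with m | m <;> rcases j with k | k
    · have := k.isLt
      rw [Matrix.submatrix_apply, Matrix.of_apply, if_neg (by simp; omega),
        Matrix.fromBlocks_apply₁₁,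
        Lmul_entry n cs _ (fun j => (Nat.choose (k:ℕ) j : ℂ) * l ^ ((k:ℕ)-j)) m k
          (fun j => by simp [Umat]),
        convD_even n l cs m k _ (Or.inl (by simp))]
    · by_cases hk : (k:ℕ) = n - 1
      · rw [Matrix.submatrix_apply, Matrix.of_apply, if_pos (by simp; omega),
          Matrix.fromBlocks_apply₁₂,
          Lmul_entry n cs _ (fun j => (Nat.choose n j : ℂ) * l ^ (n-j)) m k
            (fun j => by simp [Yst, hk]),
          convD_last_even n l cs m]
      · rw [Matrix.submatrix_apply, Matrix.of_apply, if_neg (by simp; omega),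
          Matrix.fromBlocks_apply₁₂,
          Lmul_entry n cs _ (fun j => (Nat.choose (k:ℕ) j : ℂ) * l ^ ((k:ℕ)-j)) m k
            (fun j => by simp [Yst, Umat, hk]),
          convD_even n l cs m k _ (Or.inr (by simp))]
    · have := k.isLt
      rw [Matrix.submatrix_apply, Matrix.of_apply, if_neg (by simp; omega),
        Matrix.fromBlocks_apply₂₁, Matrix.neg_apply,
        Lmul_entry n _ _ (fun j => (Nat.choose (k:ℕ) j : ℂ) * (starRingEnd ℂ l) ^ ((k:ℕ)-j)) m k
          (fun j => by simp [Umat]),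
        convD_odd_neg n l cs m k _ (by simp)]
    · by_cases hk : (k:ℕ) = n - 1
      · rw [Matrix.submatrix_apply, Matrix.of_apply, if_pos (by simp; omega),
          Matrix.fromBlocks_apply₂₂,
          Lmul_entry n _ _ (fun j => -((Nat.choose n j : ℂ) * (starRingEnd ℂ l) ^ (n-j))) m k
            (fun j => by simp [Ust, hk]),
          convD_last_odd n l cs m]
        simp only [neg_mul]
        rw [Finset.sum_neg_distrib]
      · rw [Matrix.submatrix_apply, Matrix.of_apply, if_neg (by simp; omega),
          Matrix.fromBlocks_apply₂₂,
          Lmul_entry n _ _ (fun j => (Nat.choose (k:ℕ) j : ℂ) * (starRingEnd ℂ l) ^ ((k:ℕ)-j)) m k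
            (fun j => by simp [Ust, Umat, hk]),
          convD_odd_pos n l cs m k _ (by simp)]
  -- determinant values
  have hc0' : starRingEnd ℂ (cs 0) ≠ 0 := by
    simpa using h0
  have hdetDen : Matrix.det (Matrix.of fun i (j : Fin (2*n)) => convD n l cs i j.castSucc)
      = (cs 0 ^ n * (starRingEnd ℂ (cs 0)) ^ n) * 2 ^ n := by
    rw [← Matrix.det_submatrix_equiv_self (ileq n), hDen, ← hprodD, Matrix.det_mul,
      Matrix.det_fromBlocks_zero₁₂, Matrix.det_fromBlocks_zero₂₁,
      det_Lmat, det_Lmat, det_Umat, det_UU]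
    ring
  have hdetNum : Matrix.det (Matrix.of fun i (j : Fin (2*n)) =>
        if (j : ℕ) + 1 = 2*n then convD n l cs i (Fin.last (2*n))
        else convD n l cs i j.castSucc)
      = (cs 0 ^ n * (starRingEnd ℂ (cs 0)) ^ n)
        * (-((n:ℂ) * (starRingEnd ℂ l - l)) * 2 ^ (n-1)) := by
    rw [← Matrix.det_submatrix_equiv_self (ileq n), hNum, ← hprodN, Matrix.det_mul,
      Matrix.det_fromBlocks_zero₁₂, Matrix.det_fromBlocks_zero₂₁,
      det_Lmat, det_Lmat, det_Umat, det_Zst n hn]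
    ring
  have hdne : Matrix.det (Matrix.of fun i (j : Fin (2*n)) => convD n l cs i j.castSucc) ≠ 0 := by
    rw [hdetDen]
    exact mul_ne_zero (mul_ne_zero (pow_ne_zero _ h0) (pow_ne_zero _ hc0'))
      (pow_ne_zero _ two_ne_zero)
  have key2 : cramerFn n (convD n l cs) = ((n : ℂ)/2) * (l - starRingEnd ℂ l) := by
    unfold cramerFn
    have hne : cs 0 ^ n * (starRingEnd ℂ (cs 0)) ^ n * 2 ^ n ≠ (0:ℂ) :=
      mul_ne_zero (mul_ne_zero (pow_ne_zero _ h0) (pow_ne_zero _ hc0'))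
        (pow_ne_zero _ two_ne_zero)
    rw [hdetNum, hdetDen, div_eq_iff hne]
    have h2 : (2:ℂ) ^ n = 2 * 2 ^ (n-1) := by
      conv_lhs => rw [show n = (n-1)+1 by omega]
      rw [pow_succ']
    rw [h2]
    ring
  refine ⟨hdne, key2, ?_⟩
  intro a c hc hl
  rw [key2, hl]
  simp only [map_add, map_div₀, map_neg, _root_.map_mul, Complex.conj_ofReal, Complex.conj_I, map_ofNat]
  ring
end
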